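/- Let a, b > 0 and let γ_{a,b}(t) = exp(a·t − b·e^t). Then γ_{a,b} ∈ L²(ℝ), and for all (x,ξ) ∈ ℝ², A(γ_{a,b},γ_{a,b})(x,ξ) = (2b·cosh(x/2))^{−2a+2πiξ} · Γ(2a − 2πiξ), where the power is the complex power of the positive real number 2b·cosh(x/2) and Γ is the complex Gamma function. In particular A(γ_{a,b},γ_{a,b})(x,ξ) ≠ 0 for all (x,ξ) ∈ ℝ². -/

import Mathlib

open MeasureTheory Complex

/-- The cross-ambiguity function of `f, g : ℝ → ℂ`. -/
noncomputable def ambiguity (f g : ℝ → ℂ) (x ξ : ℝ) : ℂ :=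
  ∫ t : ℝ, f (t + x / 2) * (starRingEnd ℂ) (g (t - x / 2)) *
    Complex.exp (-2 * Real.pi * Complex.I * ξ * t)

/-- `γ_{a,b}(t) = exp(a t - b e^t)`. -/
noncomputable def gammaFun (a b : ℝ) : ℝ → ℂ :=
  fun t => (Real.exp (a * t - b * Real.exp t) : ℂ)

open Set

lemma pointwise_key (s : ℂ) (c : ℝ) (t : ℝ) :
    |Real.exp t| • ((Real.exp t : ℂ) ^ (s - 1) * Complex.exp (-(c * Real.exp t))) =
      Complex.exp (s * t - c * Real.exp t) := by
  rw [abs_of_pos (Real.exp_pos t), real_smul, Complex.ofReal_exp,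
    Complex.cpow_def_of_ne_zero (Complex.exp_ne_zero _),
    Complex.log_exp (by simp [Real.pi_pos]) (by simp [Real.pi_nonneg]),
    ← Complex.exp_add, ← Complex.exp_add]
  congr 1
  ring

lemma key (s : ℂ) (hs : 0 < s.re) {c : ℝ} (hc : 0 < c) :
    Integrable (fun t : ℝ => Complex.exp (s * t - c * Real.exp t)) ∧
    ∫ t : ℝ, Complex.exp (s * t - c * Real.exp t) = (c : ℂ) ^ (-s) * Complex.Gamma s := by
  have hderiv : ∀ x ∈ (univ : Set ℝ), HasDerivWithinAt Real.exp (Real.exp x) univ x :=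
    fun x _ => (Real.hasDerivAt_exp x).hasDerivWithinAt
  have himg : Real.exp '' univ = Ioi 0 := by rw [image_univ, Real.range_exp]
  have hinj : InjOn Real.exp univ := Real.exp_injective.injOn
  set g : ℝ → ℂ := fun x => (x : ℂ) ^ (s - 1) * Complex.exp (-(c * x)) with hg_def
  have hmc : MellinConvergent (fun x : ℝ => Complex.exp (-x)) s := by
    refine (Complex.GammaIntegral_convergent hs).congr_fun (fun x _ => ?_) measurableSet_Ioi
    rw [smul_eq_mul]
    push_cast
    ring
  have hmc2 : MellinConvergent (fun t : ℝ => Complex.exp (-(c * t))) s := by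
    have := (MellinConvergent.comp_mul_left (f := fun x : ℝ => Complex.exp (-(x:ℂ)))
      (s := s) hc).mpr hmc
    simpa using this
  have hg : IntegrableOn g (Ioi 0) := by
    refine hmc2.congr_fun (fun x _ => ?_) measurableSet_Ioi
    simp [hg_def, smul_eq_mul]
  constructor
  · rw [← integrableOn_univ]
    have h2 := (integrableOn_image_iff_integrableOn_abs_deriv_smul MeasurableSet.univ hderiv
      hinj g).mp (himg ▸ hg)
    exact h2.congr_fun (fun t _ => pointwise_key s c t) MeasurableSet.univ
  · have h3 : ∫ t : ℝ, Complex.exp (s * t - c * Real.exp t) = ∫ x in Ioi (0:ℝ), g x := by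
      calc ∫ t : ℝ, Complex.exp (s * t - c * Real.exp t)
          = ∫ t in (univ : Set ℝ), |Real.exp t| • g (Real.exp t) := by
            rw [setIntegral_univ]
            exact integral_congr_ae (Filter.Eventually.of_forall fun t =>
              (pointwise_key s c t).symm)
        _ = ∫ x in Real.exp '' univ, g x :=
            (MeasureTheory.integral_image_eq_integral_abs_deriv_smul MeasurableSet.univ
              hderiv hinj g).symm
        _ = ∫ x in Ioi (0:ℝ), g x := by rw [himg]
    rw [h3]
    have h4 : ∫ x in Ioi (0:ℝ), g x = mellin (fun t : ℝ => Complex.exp (-(c * t))) s := by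
      rw [mellin]
      exact setIntegral_congr_fun measurableSet_Ioi fun x _ => by simp [hg_def, smul_eq_mul]
    have h5 : mellin (fun t : ℝ => Complex.exp (-(c * t))) s
        = (c : ℂ) ^ (-s) • mellin (fun x : ℝ => Complex.exp (-(x:ℂ))) s := by
      rw [← mellin_comp_mul_left _ _ hc]
      congr 1; ext t; norm_num
    have h6 : mellin (fun x : ℝ => Complex.exp (-(x:ℂ))) s = Complex.Gamma s := by
      rw [Complex.Gamma_eq_integral hs, Complex.GammaIntegral, mellin]
      refine setIntegral_congr_fun measurableSet_Ioi fun x _ => ?_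
      rw [smul_eq_mul]
      push_cast
      ring
    rw [h4, h5, h6, smul_eq_mul]

lemma cosh_aux (x t : ℝ) : Real.exp (t + x / 2) + Real.exp (t - x / 2)
    = 2 * Real.cosh (x / 2) * Real.exp t := by
  rw [Real.cosh_eq, Real.exp_add, Real.exp_sub, Real.exp_neg]
  field_simp

theorem ambiguity_gammaFun (a b : ℝ) (ha : 0 < a) (hb : 0 < b) :
    MemLp (gammaFun a b) 2 volume ∧
    ∀ x ξ : ℝ,
      ambiguity (gammaFun a b) (gammaFun a b) x ξ =
        ((2 * b * Real.cosh (x / 2) : ℝ) : ℂ) ^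
            ((-2 * a : ℂ) + 2 * Real.pi * Complex.I * ξ) *
          Complex.Gamma ((2 * a : ℂ) - 2 * Real.pi * Complex.I * ξ) ∧
      ambiguity (gammaFun a b) (gammaFun a b) x ξ ≠ 0 := by
  constructor
  · -- Memℒp
    have hcont : Continuous (gammaFun a b) := by
      apply Complex.continuous_ofReal.comp
      exact Real.continuous_exp.comp (by fun_prop)
    rw [memLp_two_iff_integrable_sq_norm hcont.aestronglyMeasurable]
    have hkey := (key (2 * a : ℂ) (by simp [ha]) (c := 2 * b) (by linarith)).1
    refine hkey.norm.congr (Filter.Eventually.of_forall fun t => ?_)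
    have h1 : (2 * (a : ℂ) * t - ((2 * b : ℝ) : ℂ) * (Real.exp t : ℂ))
        = ((2 * a * t - 2 * b * Real.exp t : ℝ) : ℂ) := by push_cast; ring
    simp only [h1, ← Complex.ofReal_exp, gammaFun, Complex.norm_real]
    rw [Real.norm_eq_abs, Real.norm_eq_abs, abs_of_pos (Real.exp_pos _),
      abs_of_pos (Real.exp_pos _), sq, ← Real.exp_add]
    congr 1
    ring
  · intro x ξ
    set c : ℝ := 2 * b * Real.cosh (x / 2) with hc_def
    have hc : 0 < c := by positivity
    set s : ℂ := (2 * a : ℂ) - 2 * Real.pi * Complex.I * ξ with hs_def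
    have hs : 0 < s.re := by simp [hs_def, ha]
    have hpt : ∀ t : ℝ, gammaFun a b (t + x / 2) *
        (starRingEnd ℂ) (gammaFun a b (t - x / 2)) *
        Complex.exp (-2 * Real.pi * Complex.I * ξ * t)
        = Complex.exp (s * t - c * Real.exp t) := by
      intro t
      have hAB : (a * (t + x / 2) - b * Real.exp (t + x / 2)) +
          (a * (t - x / 2) - b * Real.exp (t - x / 2)) = 2 * a * t - c * Real.exp t := by
        have := cosh_aux x t
        rw [hc_def]
        nlinarith [this]
      rw [gammaFun, gammaFun, Complex.conj_ofReal, ← Complex.ofReal_mul, ← Real.exp_add, hAB,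
        Complex.ofReal_exp, ← Complex.exp_add]
      congr 1
      rw [hs_def]
      push_cast
      ring
    have hval : ambiguity (gammaFun a b) (gammaFun a b) x ξ
        = (c : ℂ) ^ (-s) * Complex.Gamma s := by
      rw [ambiguity, ← (key s hs hc).2]
      exact integral_congr_ae (Filter.Eventually.of_forall hpt)
    have hexp : -s = (-2 * a : ℂ) + 2 * Real.pi * Complex.I * ξ := by rw [hs_def]; ring
    constructor
    · rw [hval, hexp, hc_def]
    · rw [hval]
      apply mul_ne_zero
      · rw [Complex.cpow_def_of_ne_zero (by exact_mod_cast ne_of_gt hc)]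
        exact Complex.exp_ne_zero _
      · exact Complex.Gamma_ne_zero_of_re_pos hs
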